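/- For every infinite binary word x, the following are equivalent: (i) 1·0·μ(x) is overlap-free and 0·μ(x) begins with 00; (ii) 1·x is overlap-free and x begins with 0. -/

import Mathlib

set_option linter.unreachableTactic false
set_option linter.unusedTactic false


/-- An overlap: a word of the form a x a x a, with `a` a single letter. -/
def Overlap (w : List (Fin 2)) : Prop :=
  ∃ (a : Fin 2) (x : List (Fin 2)), w = [a] ++ x ++ [a] ++ x ++ [a]

/-- `w` occurs as a (contiguous) factor of the infinite word `x`. -/
def FactorOf (w : List (Fin 2)) (x : ℕ → Fin 2) : Prop :=
  ∃ i, w = (List.range w.length).map (fun j => x (i + j))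

/-- An infinite binary word is overlap-free if no finite factor is an overlap. -/
def OverlapFree (x : ℕ → Fin 2) : Prop :=
  ∀ w, FactorOf w x → ¬ Overlap w

/-- The Thue–Morse morphism applied to an infinite word. -/
def mu (x : ℕ → Fin 2) : ℕ → Fin 2 :=
  fun n => if n % 2 = 0 then x (n / 2) else 1 - x (n / 2)

/-- Prepend a finite word to an infinite word. -/
def prepend (p : List (Fin 2)) (w : ℕ → Fin 2) : ℕ → Fin 2 :=
  fun n => if h : n < p.length then p.get ⟨n, h⟩ else w (n - p.length)

/-- `x` begins with the finite word `p`. -/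
def BeginsWith (x : ℕ → Fin 2) (p : List (Fin 2)) : Prop :=
  ∀ i < p.length, x i = p.getD i 0

/-! ### Auxiliary material -/

/-- `y` has a periodic window: period `p ≥ 1` valid on offsets `0..p` from some `i`. -/
def HasOv (y : ℕ → Fin 2) : Prop :=
  ∃ i p, 1 ≤ p ∧ ∀ j ≤ p, y (i + j) = y (i + j + p)

lemma fin2_sub_inj {a b : Fin 2} (h : 1 - a = 1 - b) : a = b := by
  revert h; fin_cases a <;> fin_cases b <;> decide

lemma fin2_ne (a : Fin 2) : a ≠ 1 - a := by fin_cases a <;> decide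

/-- segment of an infinite word -/
def seg (y : ℕ → Fin 2) (i L : ℕ) : List (Fin 2) :=
  (List.range L).map (fun j => y (i + j))

lemma seg_length (y : ℕ → Fin 2) (i L : ℕ) : (seg y i L).length = L := by
  simp [seg]

lemma seg_add (y : ℕ → Fin 2) (i m n : ℕ) :
    seg y i (m + n) = seg y i m ++ seg y (i + m) n := by
  unfold seg
  rw [List.range_add, List.map_append, List.map_map]
  congr 1
  apply List.map_congr_left
  intro j _
  simp [Nat.add_assoc]

lemma seg_one (y : ℕ → Fin 2) (i : ℕ) : seg y i 1 = [y i] := by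
  simp [seg, List.range_succ]

lemma seg_factorOf (y : ℕ → Fin 2) (i L : ℕ) : FactorOf (seg y i L) y :=
  ⟨i, by rw [seg_length]; rfl⟩

lemma seg_congr (y : ℕ → Fin 2) {i i' : ℕ} (L : ℕ)
    (h : ∀ j < L, y (i + j) = y (i' + j)) : seg y i L = seg y i' L := by
  unfold seg
  apply List.map_congr_left
  intro j hj
  exact h j (List.mem_range.mp hj)

lemma not_overlapFree_of_hasOv {y : ℕ → Fin 2} (h : HasOv y) : ¬ OverlapFree y := by
  obtain ⟨i, p, hp, hper⟩ := h
  intro hof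
  refine hof (seg y i (2 * p + 1)) (seg_factorOf y i _) ⟨y i, seg y (i + 1) (p - 1), ?_⟩
  have e1 : 2 * p + 1 = 1 + (p - 1) + 1 + (p - 1) + 1 := by omega
  rw [e1, seg_add, seg_add, seg_add, seg_add, seg_one, seg_one, seg_one]
  have h1 : i + (1 + (p - 1)) = i + p := by omega
  have h2 : i + (1 + (p - 1) + 1) = i + p + 1 := by omega
  have h3 : i + (1 + (p - 1) + 1 + (p - 1)) = i + 2 * p := by omega
  rw [h1, h2, h3]
  have e2 : y (i + p) = y i := by
    have := hper 0 (by omega); simpa using this.symm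
  have e3 : y (i + 2 * p) = y i := by
    have h := hper p le_rfl
    have hh : i + p + p = i + 2 * p := by ring
    rw [hh] at h
    rw [← h]; exact e2
  have e4 : seg y (i + p + 1) (p - 1) = seg y (i + 1) (p - 1) := by
    apply seg_congr
    intro j hj
    have := hper (1 + j) (by omega)
    have eq1 : i + (1 + j) + p = i + p + 1 + j := by ring
    have eq2 : i + (1 + j) = i + 1 + j := by ring
    rw [eq1, eq2] at this
    exact this.symm
  rw [e2, e3, e4]

lemma hasOv_of_overlap_factor {y : ℕ → Fin 2} {w : List (Fin 2)}
    (hf : FactorOf w y) (ho : Overlap w) : HasOv y := by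
  obtain ⟨a, z, hw⟩ := ho
  obtain ⟨i, hfac⟩ := hf
  set p := z.length + 1 with hpdef
  have hwl : w.length = 2 * p + 1 := by
    subst hw; simp; omega
  have hget : ∀ j, j < w.length → w[j]? = some (y (i + j)) := by
    intro j hj
    conv_lhs => rw [hfac]
    rw [List.getElem?_map, List.getElem?_range hj]
    rfl
  set u : List (Fin 2) := [a] ++ z ++ [a] with hu
  have hul : u.length = p + 1 := by simp [hu]; omega
  have hvl : ([a] ++ z).length = p := by simp; omega
  have hsplit : w = ([a] ++ z) ++ u := by
    rw [hw, hu]; simp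
  refine ⟨i, p, by omega, ?_⟩
  intro j hj
  have hj1 : j < w.length := by omega
  have hj2 : j + p < w.length := by omega
  have k1 := hget j hj1
  have k2 := hget (j + p) hj2
  have l1 : w[j]? = u[j]? := by
    conv_lhs => rw [hw]
    have : ([a] ++ z ++ [a] ++ z ++ [a] : List (Fin 2)) = u ++ (z ++ [a]) := by
      rw [hu]; simp
    rw [this, List.getElem?_append_left (by omega)]
  have l2 : w[j + p]? = u[j]? := by
    conv_lhs => rw [hsplit]
    rw [List.getElem?_append_right (by omega)]
    congr 1
    omega
  rw [l1] at k1
  rw [l2] at k2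
  have : some (y (i + j)) = some (y (i + (j + p))) := by rw [← k1, k2]
  have h2 : i + j + p = i + (j + p) := by ring
  rw [h2]
  exact Option.some.inj this

lemma overlapFree_iff_not_hasOv (y : ℕ → Fin 2) : OverlapFree y ↔ ¬ HasOv y := by
  constructor
  · intro hof hov
    exact not_overlapFree_of_hasOv hov hof
  · intro h w hf ho
    exact h (hasOv_of_overlap_factor hf ho)

lemma mu_even (y : ℕ → Fin 2) (n : ℕ) : mu y (2 * n) = y n := by
  simp [mu, Nat.mul_div_cancel_left, Nat.mul_mod_right]

lemma mu_odd (y : ℕ → Fin 2) (n : ℕ) : mu y (2 * n + 1) = 1 - y n := by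
  have h1 : (2 * n + 1) % 2 = 1 := by omega
  have h2 : (2 * n + 1) / 2 = n := by omega
  simp [mu, h1, h2]

lemma hasOv_mu_of_hasOv {y : ℕ → Fin 2} (h : HasOv y) : HasOv (mu y) := by
  obtain ⟨i, p, hp, hper⟩ := h
  refine ⟨2 * i, 2 * p, by omega, ?_⟩
  intro j hj
  have key : y (i + j / 2) = y (i + j / 2 + p) := hper (j / 2) (by omega)
  rcases Nat.even_or_odd j with ⟨t, ht⟩ | ⟨t, ht⟩
  · have e1 : 2 * i + j = 2 * (i + t) := by omega
    have e2 : 2 * i + j + 2 * p = 2 * (i + t + p) := by omega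
    rw [e2, e1, mu_even, mu_even]
    have : t = j / 2 := by omega
    rw [this]; exact key
  · have e1 : 2 * i + j = 2 * (i + t) + 1 := by omega
    have e2 : 2 * i + j + 2 * p = 2 * (i + t + p) + 1 := by omega
    rw [e2, e1, mu_odd, mu_odd]
    have : t = j / 2 := by omega
    rw [this, key]

lemma hasOv_of_hasOv_mu {y : ℕ → Fin 2} (h : HasOv (mu y)) : HasOv y := by
  obtain ⟨i, p, hp, hper⟩ := h
  rcases Nat.even_or_odd p with ⟨q, hq⟩ | ⟨r, hr⟩
  · -- p = 2q even: y has period q on window from i/2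
    refine ⟨i / 2, q, by omega, ?_⟩
    intro t ht
    have key := hper (2 * t) (by omega)
    rcases Nat.even_or_odd i with ⟨N, hN⟩ | ⟨N, hN⟩
    · have e1 : i + 2 * t = 2 * (N + t) := by omega
      have e2 : i + 2 * t + p = 2 * (N + t + q) := by omega
      rw [e2, e1, mu_even, mu_even] at key
      have : i / 2 = N := by omega
      rw [this]
      have e3 : N + t + q = N + t + q := rfl
      convert key using 2 <;> omega
    · have e1 : i + 2 * t = 2 * (N + t) + 1 := by omega
      have e2 : i + 2 * t + p = 2 * (N + t + q) + 1 := by omega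
      rw [e2, e1, mu_odd, mu_odd] at key
      have key2 := fin2_sub_inj key
      have : i / 2 = N := by omega
      rw [this]
      convert key2 using 2 <;> omega
  · -- p = 2r + 1 odd
    rcases Nat.eq_or_lt_of_le hp with h1 | h1
    · -- p = 1 : direct contradiction from the complementary-pairs structure of mu
      exfalso
      have hp1 : p = 1 := h1.symm
      subst hp1
      have k0 : mu y (i + 0) = mu y (i + 0 + 1) := hper 0 (by omega)
      have k1 : mu y (i + 1) = mu y (i + 1 + 1) := hper 1 le_rfl
      rcases Nat.even_or_odd i with ⟨N, hN⟩ | ⟨N, hN⟩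
      · have e2 : i + 0 + 1 = 2 * N + 1 := by omega
        have e1 : i + 0 = 2 * N := by omega
        rw [e2, e1, mu_even, mu_odd] at k0
        exact fin2_ne _ k0
      · have e2 : i + 1 + 1 = 2 * (N + 1) + 1 := by omega
        have e1 : i + 1 = 2 * (N + 1) := by omega
        rw [e2, e1, mu_even, mu_odd] at k1
        exact fin2_ne _ k1
    · -- p = 2r+1, r ≥ 1 : y has a cube (three equal consecutive letters)
      have hr1 : 1 ≤ r := by omega
      rcases Nat.even_or_odd i with ⟨N, hN⟩ | ⟨N, hN⟩
      · -- i = 2N: y (N+t+r) = y (N+t+r+1) for t ≤ r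
        have step : ∀ t ≤ r, y (N + t + r) = y (N + t + r + 1) := by
          intro t ht
          have keyE := hper (2 * t) (by omega)
          have keyO := hper (2 * t + 1) (by omega)
          have e1 : i + 2 * t = 2 * (N + t) := by omega
          have e2 : i + 2 * t + p = 2 * (N + t + r) + 1 := by omega
          have e3 : i + (2 * t + 1) = 2 * (N + t) + 1 := by omega
          have e4 : i + (2 * t + 1) + p = 2 * (N + t + r + 1) := by omega
          rw [e2, e1, mu_even, mu_odd] at keyE
          rw [e4, e3, mu_odd, mu_even] at keyO
          -- keyE : y (N+t) = 1 - y (N+t+r); keyO : 1 - y(N+t) = y (N+t+r+1)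
          rw [keyE] at keyO
          have : (1 : Fin 2) - (1 - y (N + t + r)) = y (N + t + r) := by
            generalize y (N + t + r) = a; fin_cases a <;> decide
          rw [this] at keyO
          exact keyO
        refine ⟨N + r, 1, le_rfl, ?_⟩
        intro j hj
        interval_cases j
        · simpa using step 0 (by omega)
        · have := step 1 hr1
          convert this using 2 <;> omega
      · -- i = 2N+1: y (N+t) = y (N+t+1) for t ≤ r
        have step : ∀ t ≤ r, y (N + t) = y (N + t + 1) := by
          intro t ht
          have keyE := hper (2 * t) (by omega)
          have keyO := hper (2 * t + 1) (by omega)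
          have e1 : i + 2 * t = 2 * (N + t) + 1 := by omega
          have e2 : i + 2 * t + p = 2 * (N + t + r + 1) := by omega
          have e3 : i + (2 * t + 1) = 2 * (N + t + 1) := by omega
          have e4 : i + (2 * t + 1) + p = 2 * (N + t + r + 1) + 1 := by omega
          rw [e2, e1, mu_odd, mu_even] at keyE
          rw [e4, e3, mu_even, mu_odd] at keyO
          -- keyE : 1 - y (N+t) = y (N+t+r+1); keyO : y (N+t+1) = 1 - y (N+t+r+1)
          rw [← keyE] at keyO
          have : (1 : Fin 2) - (1 - y (N + t)) = y (N + t) := by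
            generalize y (N + t) = a; fin_cases a <;> decide
          rw [this] at keyO
          exact keyO.symm
        refine ⟨N, 1, le_rfl, ?_⟩
        intro j hj
        interval_cases j
        · simpa using step 0 (by omega)
        · have := step 1 hr1
          convert this using 2 <;> omega

lemma prepend_mu_eq (x : ℕ → Fin 2) :
    prepend [1, 0] (mu x) = mu (prepend [1] x) := by
  funext n
  match n with
  | 0 => simp [prepend, mu]
  | 1 => simp [prepend, mu]
  | (m + 2) =>
    have hL : prepend [1, 0] (mu x) (m + 2) = mu x m := by
      simp [prepend]
    rw [hL]
    have h2 : (m + 2) % 2 = m % 2 := by omega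
    have h3 : (m + 2) / 2 = m / 2 + 1 := by omega
    have h4 : prepend [1] x (m / 2 + 1) = x (m / 2) := by
      simp [prepend]
    simp only [mu, h2, h3, h4]

theorem onezero_mu_begins_00_iff (x : ℕ → Fin 2) :
    (OverlapFree (prepend [1, 0] (mu x)) ∧ BeginsWith (prepend [0] (mu x)) [0, 0]) ↔
      (OverlapFree (prepend [1] x) ∧ BeginsWith x [0]) := by
  have hmu : OverlapFree (prepend [1, 0] (mu x)) ↔ OverlapFree (prepend [1] x) := by
    rw [prepend_mu_eq, overlapFree_iff_not_hasOv, overlapFree_iff_not_hasOv]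
    exact not_congr ⟨hasOv_of_hasOv_mu, hasOv_mu_of_hasOv⟩
  have hbw : BeginsWith (prepend [0] (mu x)) [0, 0] ↔ BeginsWith x [0] := by
    constructor
    · intro h i hi
      have hi' : i = 0 := by simp at hi; omega
      subst hi'
      have h1 := h 1 (by simp)
      simp [prepend, mu] at h1 ⊢
      exact h1
    · intro h i hi
      have hi' : i < 2 := by simpa using hi
      interval_cases i
      · simp [prepend]
      · have h0 := h 0 (by simp)
        simp [prepend, mu] at h0 ⊢
        exact h0
  rw [hmu, hbw]
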